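/- Let J : ℝⁿ → ℝ be twice continuously differentiable with M-Lipschitz Hessian. Let θ, d, g ∈ ℝⁿ, let H̃ be a symmetric n×n real matrix, and let λ ≥ 0 satisfy (H̃ + λI)d + g = 0 with H̃ + λI positive semidefinite. Then (λ/2)‖d‖² ≤ J(θ) − J(θ + d) + ‖∇J(θ) − g‖·‖d‖ + (1/2)‖∇²J(θ) − H̃‖·‖d‖² + (M/6)‖d‖³. -/

import Mathlib

open RealInnerProductSpace Set

section TaylorAux
variable {F : Type*} [NormedAddCommGroup F] [InnerProductSpace ℝ F] [CompleteSpace F]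

private theorem taylor_aux (M : ℝ) (J : F → ℝ) (hJ : ContDiff ℝ 2 J)
    (hLip : ∀ θ₁ θ₂ : F, ‖fderiv ℝ (gradient J) θ₁ - fderiv ℝ (gradient J) θ₂‖ ≤ M * ‖θ₁ - θ₂‖)
    (θ d : F) :
    J (θ + d) ≤ J θ + ⟪gradient J θ, d⟫ + (1/2) * ⟪fderiv ℝ (gradient J) θ d, d⟫
      + (M/6) * ‖d‖^3 := by
  have hg1 : ContDiff ℝ 1 (gradient J) := by
    have h1 : ContDiff ℝ 1 (fderiv ℝ J) := hJ.fderiv_right (by norm_num)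
    exact (InnerProductSpace.toDual ℝ F).symm.toContinuousLinearEquiv.contDiff.comp h1
  set H := fderiv ℝ (gradient J) θ with hH
  -- the line
  have hline : ∀ t : ℝ, HasDerivAt (fun t : ℝ => θ + t • d) d t := by
    intro t
    simpa using ((hasDerivAt_id t).smul_const d).const_add θ
  -- G and its derivative
  set G : ℝ → F := fun t => gradient J (θ + t • d) - gradient J θ - t • (H d) with hGdef
  have hGderiv : ∀ t : ℝ, HasDerivAt G ((fderiv ℝ (gradient J) (θ + t • d)) d - H d) t := by
    intro t
    have h1 : HasDerivAt (fun t : ℝ => gradient J (θ + t • d))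
        ((fderiv ℝ (gradient J) (θ + t • d)) d) t :=
      by have := ((hg1.differentiable one_ne_zero (θ + t • d)).hasFDerivAt).comp_hasDerivAt t (hline t); exact this
    simpa [Pi.sub_def] using (h1.sub_const (gradient J θ)).sub ((hasDerivAt_id t).smul_const (H d))
  have hGbound : ∀ t ∈ Icc (0:ℝ) 1, ‖G t‖ ≤ M * ‖d‖^2 / 2 * t^2 := by
    have hB : ∀ t : ℝ, HasDerivAt (fun t => M * ‖d‖^2 / 2 * t^2) (M * ‖d‖^2 * t) t := by
      intro t
      have := (hasDerivAt_pow 2 t).const_mul (M * ‖d‖^2 / 2)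
      simpa using this.congr_deriv (by ring)
    refine image_norm_le_of_norm_deriv_right_le_deriv_boundary
      (f := G) (f' := fun t => (fderiv ℝ (gradient J) (θ + t • d)) d - H d)
      (fun t _ => (hGderiv t).continuousAt.continuousWithinAt)
      (fun t _ => (hGderiv t).hasDerivWithinAt) ?_ hB ?_
    · simp [hGdef]
    · intro t ht
      have h1 : ‖(fderiv ℝ (gradient J) (θ + t • d)) d - H d‖
          ≤ ‖fderiv ℝ (gradient J) (θ + t • d) - H‖ * ‖d‖ := by
        have := (fderiv ℝ (gradient J) (θ + t • d) - H).le_opNorm d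
        simpa using this
      have h2 : ‖fderiv ℝ (gradient J) (θ + t • d) - H‖ ≤ M * (t * ‖d‖) := by
        have := hLip (θ + t • d) θ
        simpa [norm_smul, abs_of_nonneg ht.1] using this
      calc ‖(fderiv ℝ (gradient J) (θ + t • d)) d - H d‖
          ≤ M * (t * ‖d‖) * ‖d‖ := h1.trans (by
            exact mul_le_mul_of_nonneg_right h2 (norm_nonneg d))
        _ = M * ‖d‖^2 * t := by ring
  -- ψ
  set ψ : ℝ → ℝ := fun t => J (θ + t • d) - J θ - t * ⟪gradient J θ, d⟫
      - t^2/2 * ⟪H d, d⟫ with hψdef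
  have hJd : Differentiable ℝ J := hJ.differentiable (by norm_num)
  have hfd : ∀ x : F, fderiv ℝ J x = fun v => ⟪gradient J x, v⟫ := by
    intro x; ext v; simp [gradient, InnerProductSpace.toDual_apply_apply]
  have hψderiv : ∀ t : ℝ, HasDerivAt ψ ⟪G t, d⟫ t := by
    intro t
    have h1 : HasDerivAt (fun t : ℝ => J (θ + t • d)) ⟪gradient J (θ + t • d), d⟫ t := by
      have := ((hJd (θ + t • d)).hasFDerivAt).comp_hasDerivAt t (hline t)
      rw [hfd] at this; exact this
    have h2 := ((h1.sub_const (J θ)).sub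
        ((hasDerivAt_id t).const_mul (⟪gradient J θ, d⟫ : ℝ))).sub
        (((hasDerivAt_pow 2 t).div_const 2).mul_const (⟪H d, d⟫ : ℝ))
    convert h2 using 1
    · rfl
    · rfl
    · ext s; simp only [hψdef, id, Pi.sub_apply]; ring
    · simp only [hGdef, inner_sub_left, real_inner_smul_left, id]
      push_cast
      ring
  have hψbound : |ψ 1| ≤ M * ‖d‖^3 / 6 := by
    have hB : ∀ t : ℝ, HasDerivAt (fun t => M * ‖d‖^3 / 6 * t^3) (M * ‖d‖^3 / 2 * t^2) t := by
      intro t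
      have := (hasDerivAt_pow 3 t).const_mul (M * ‖d‖^3 / 6)
      exact this.congr_deriv (by ring)
    have key := image_norm_le_of_norm_deriv_right_le_deriv_boundary
      (a := 0) (b := 1) (f := ψ) (f' := fun t => ⟪G t, d⟫)
      (fun t _ => (hψderiv t).continuousAt.continuousWithinAt)
      (fun t _ => (hψderiv t).hasDerivWithinAt) (by simp [hψdef]) hB ?_
    · have := key (x := 1) (by norm_num)
      simpa using this
    · intro t ht
      have h1 : |⟪G t, d⟫| ≤ ‖G t‖ * ‖d‖ := abs_real_inner_le_norm _ _
      have h2 := hGbound t (Ico_subset_Icc_self ht)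
      calc ‖⟪G t, d⟫‖ ≤ ‖G t‖ * ‖d‖ := h1
        _ ≤ M * ‖d‖^2 / 2 * t^2 * ‖d‖ :=
            mul_le_mul_of_nonneg_right h2 (norm_nonneg d)
        _ = M * ‖d‖^3 / 2 * t^2 := by ring
  have := (abs_le.mp hψbound).2
  simp only [hψdef, one_smul, one_mul, one_pow] at this
  nlinarith [this]

end TaylorAux

theorem multiplier_bound_of_trust_region_step {n : ℕ} (M : ℝ)
    (J : EuclideanSpace ℝ (Fin n) → ℝ)
    (hJ : ContDiff ℝ 2 J)
    (hLip : ∀ θ₁ θ₂ : EuclideanSpace ℝ (Fin n),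
      ‖fderiv ℝ (gradient J) θ₁ - fderiv ℝ (gradient J) θ₂‖ ≤ M * ‖θ₁ - θ₂‖)
    (θ d g : EuclideanSpace ℝ (Fin n))
    (Htil : EuclideanSpace ℝ (Fin n) →L[ℝ] EuclideanSpace ℝ (Fin n))
    (hHtil : ∀ x y : EuclideanSpace ℝ (Fin n), ⟪Htil x, y⟫ = ⟪x, Htil y⟫)
    (lam : ℝ) (hlam : 0 ≤ lam)
    (hstat : Htil d + lam • d + g = 0)
    (hpsd : ∀ x : EuclideanSpace ℝ (Fin n), 0 ≤ ⟪Htil x, x⟫ + lam * ‖x‖ ^ 2) :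
    (lam / 2) * ‖d‖ ^ 2
      ≤ J θ - J (θ + d)
        + ‖gradient J θ - g‖ * ‖d‖
        + (1 / 2) * ‖fderiv ℝ (gradient J) θ - Htil‖ * ‖d‖ ^ 2
        + (M / 6) * ‖d‖ ^ 3 := by
  have taylor := taylor_aux M J hJ hLip θ d
  set H := fderiv ℝ (gradient J) θ with hH
  have hg : g = -(Htil d + lam • d) := eq_neg_of_add_eq_zero_right hstat
  have e1 : ⟪gradient J θ, d⟫ = ⟪gradient J θ - g, d⟫ - ⟪Htil d, d⟫ - lam * ‖d‖ ^ 2 := by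
    rw [inner_sub_left, hg]
    rw [inner_neg_left, inner_add_left, real_inner_smul_left, real_inner_self_eq_norm_sq]
    ring
  have e2 : ⟪H d, d⟫ = ⟪(H - Htil) d, d⟫ + ⟪Htil d, d⟫ := by
    simp [inner_sub_left]
  have b1 : ⟪gradient J θ - g, d⟫ ≤ ‖gradient J θ - g‖ * ‖d‖ := real_inner_le_norm _ _
  have b2 : ⟪(H - Htil) d, d⟫ ≤ ‖H - Htil‖ * ‖d‖ ^ 2 := by
    calc ⟪(H - Htil) d, d⟫ ≤ ‖(H - Htil) d‖ * ‖d‖ := real_inner_le_norm _ _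
      _ ≤ ‖H - Htil‖ * ‖d‖ * ‖d‖ :=
          mul_le_mul_of_nonneg_right ((H - Htil).le_opNorm d) (norm_nonneg d)
      _ = ‖H - Htil‖ * ‖d‖ ^ 2 := by ring
  have b3 := hpsd d
  linarith
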